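/- Let N be an even positive integer. For each i with 0 ≤ i ≤ N, the Lagrange basis polynomial ℓ_i(x) = ∏_{j=0, j≠i}^{N} (x - (j - N/2))/(i - j) on the nodes {-N/2, -N/2+1, ..., N/2} satisfies ℓ_i(x) = C(N/2 + x, i) · C(N/2 - x, N - i). Consequently, the Lagrange interpolating polynomial I_N of the points {(i - N/2, sgn(i - N/2)) : 0 ≤ i ≤ N} is I_N(x) = ∑_{i=0}^{N} sgn(i - N/2) C(N/2 + x, i) C(N/2 - x, N - i). -/
import Mathlib


/-- Generalized binomial coefficient `C(z,k) = z(z-1)⋯(z-k+1)/k!`. -/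
noncomputable def gch (z : ℝ) (k : ℕ) : ℝ :=
  (∏ i ∈ Finset.range k, (z - i)) / (Nat.factorial k)

lemma fact_prod (i : ℕ) : ∏ j ∈ Finset.range i, ((i : ℝ) - j) = i.factorial := by
  induction i with
  | zero => simp
  | succ n ih =>
    rw [Finset.prod_range_succ']
    have h1 : (∏ j ∈ Finset.range n, (((n + 1 : ℕ) : ℝ) - ((j + 1 : ℕ) : ℝ)))
        = ∏ j ∈ Finset.range n, ((n : ℝ) - j) :=
      Finset.prod_congr rfl fun j _ => by push_cast; ring
    rw [h1, ih, Nat.factorial_succ]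
    push_cast; ring

lemma part1 (i : ℕ) (c x : ℝ) :
    ∏ j ∈ Finset.range i, (x - ((j : ℝ) - c)) / ((i : ℝ) - j) = gch (c + x) i := by
  rw [Finset.prod_div_distrib, gch, fact_prod]
  congr 1
  exact Finset.prod_congr rfl fun j _ => by ring

lemma part2 (N i : ℕ) (hi : i ≤ N) (x : ℝ) :
    ∏ j ∈ Finset.Ico (i + 1) (N + 1), (x - ((j : ℝ) - (N : ℝ) / 2)) / ((i : ℝ) - j)
      = gch ((N : ℝ) / 2 - x) (N - i) := by
  rw [Finset.prod_Ico_eq_prod_range]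
  have hn : N + 1 - (i + 1) = N - i := by omega
  rw [hn]
  set n := N - i with hndef
  have key : ∀ m ∈ Finset.range n,
      (x - (((i + 1 + m : ℕ) : ℝ) - (N : ℝ) / 2)) / ((i : ℝ) - ((i + 1 + m : ℕ) : ℝ))
        = ((N : ℝ) / 2 - x - ((n - 1 - m : ℕ) : ℝ)) / ((m : ℝ) + 1) := by
    intro m hm
    rw [Finset.mem_range] at hm
    have h1 : ((n - 1 - m : ℕ) : ℝ) = (N : ℝ) - i - 1 - m := by
      have : n - 1 - m = N - (i + 1 + m) := by omega
      rw [this, Nat.cast_sub (by omega)]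
      push_cast; ring
    rw [h1]
    have h2 : (i : ℝ) - ((i + 1 + m : ℕ) : ℝ) = -((m : ℝ) + 1) := by push_cast; ring
    have h3 : x - (((i + 1 + m : ℕ) : ℝ) - (N : ℝ) / 2)
        = -((N : ℝ) / 2 - x - ((N : ℝ) - i - 1 - m)) := by push_cast; ring
    rw [h2, h3, neg_div_neg_eq]
  rw [Finset.prod_congr rfl key, Finset.prod_div_distrib,
    Finset.prod_range_reflect (fun k => (N : ℝ) / 2 - x - (k : ℕ))]
  have hden : ∏ m ∈ Finset.range n, ((m : ℝ) + 1) = (n.factorial : ℝ) := by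
    exact_mod_cast Finset.prod_range_add_one_eq_factorial n
  rw [hden, gch]

lemma erase_split (N i : ℕ) (hi : i ≤ N) :
    (Finset.range (N + 1)).erase i = Finset.range i ∪ Finset.Ico (i + 1) (N + 1) := by
  ext j
  simp only [Finset.mem_erase, Finset.mem_range, Finset.mem_union, Finset.mem_Ico]
  omega

/-- The Lagrange basis polynomials on the nodes `{-N/2, ..., N/2}` satisfy
`ℓ_i(x) = C(N/2+x, i) C(N/2-x, N-i)`; consequently the Lagrange interpolating
polynomial of the points `(i - N/2, sgn(i - N/2))`, `0 ≤ i ≤ N`, is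
`I_N(x) = ∑_{i=0}^N sgn(i - N/2) C(N/2+x, i) C(N/2-x, N-i)`. -/
theorem lagrange_basis_binomial (N : ℕ) (hN : 0 < N) (hNe : Even N) :
    (∀ i ≤ N, ∀ x : ℝ,
      (∏ j ∈ (Finset.range (N + 1)).erase i,
          (x - ((j : ℝ) - (N : ℝ) / 2)) / ((i : ℝ) - (j : ℝ)))
        = gch ((N : ℝ) / 2 + x) i * gch ((N : ℝ) / 2 - x) (N - i)) ∧
    (∀ x : ℝ,
      (∑ i ∈ Finset.range (N + 1),
        Real.sign ((i : ℝ) - (N : ℝ) / 2) *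
          ∏ j ∈ (Finset.range (N + 1)).erase i,
            (x - ((j : ℝ) - (N : ℝ) / 2)) / ((i : ℝ) - (j : ℝ)))
      = ∑ i ∈ Finset.range (N + 1),
          Real.sign ((i : ℝ) - (N : ℝ) / 2) *
            (gch ((N : ℝ) / 2 + x) i * gch ((N : ℝ) / 2 - x) (N - i))) := by
  have main : ∀ i ≤ N, ∀ x : ℝ,
      (∏ j ∈ (Finset.range (N + 1)).erase i,
          (x - ((j : ℝ) - (N : ℝ) / 2)) / ((i : ℝ) - (j : ℝ)))
        = gch ((N : ℝ) / 2 + x) i * gch ((N : ℝ) / 2 - x) (N - i) := by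
    intro i hi x
    rw [erase_split N i hi, Finset.prod_union (by
      simp only [Finset.disjoint_left, Finset.mem_range, Finset.mem_Ico]
      omega), part1 i ((N : ℝ) / 2) x, part2 N i hi x]
  refine ⟨main, fun x => ?_⟩
  refine Finset.sum_congr rfl fun i hi => ?_
  rw [Finset.mem_range] at hi
  rw [main i (by omega) x]
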